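/- Let n_1,…,n_{I+1} and m_1,…,m_I be positive integers, v_i := \sum_{j=1}^{i}(n_j + m_j), w_i := 1 + n_i + v_{i-1} (with v_0 = 0). Then \sum_{i=1}^{I} q^{-1 - \sum_{j=1}^{i} n_j}·[m_i]/([w_i]·[w_{i+1}]) · \prod_{j=i+2}^{I+1} [1 + v_{j-1}]/[w_j] = \prod_{i=1}^{I+1} [1 + v_{i-1}]/[w_i] - q^{\sum_{i=1}^{I} m_i}/[w_{I+1}], where [n] is the quantum integer and indices follow the convention v_i = \sum_{j≤i}(n_j+m_j). -/

import Mathlib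

open Finset

/-- The quantum integer `[n] = (q^n - q^(-n))/(q - q⁻¹)`. -/
noncomputable def qint {K : Type*} [Field K] (q : K) (n : ℤ) : K :=
  (q ^ n - q ^ (-n)) / (q - q⁻¹)

lemma qint_one {K : Type*} [Field K] {q : K} (hq : q ≠ 0) (hq2 : q ^ 2 ≠ 1) :
    qint q 1 = 1 := by
  have hd : q - q⁻¹ ≠ 0 := by
    intro h
    apply hq2
    have h' : q = q⁻¹ := sub_eq_zero.mp h
    have : q * q = 1 := by nth_rewrite 2 [h']; field_simp
    rw [sq]; exact this
  simp only [qint, zpow_one, zpow_neg_one]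
  exact div_self hd

lemma qint_key {K : Type*} [Field K] {q : K} (hq : q ≠ 0) (M a m : ℤ) :
    q ^ (M - a) * qint q m = q ^ M * qint q (a + m) - q ^ (M + m) * qint q a := by
  simp only [qint, mul_div_assoc, ← sub_div]
  simp only [zpow_sub₀ hq, zpow_add₀ hq, zpow_neg, neg_add]
  field_simp
  rcases eq_or_ne (q * q - 1) 0 with h | h
  · ring
  · have ha := zpow_ne_zero (a : ℤ) hq
    have hmm := zpow_ne_zero (m : ℤ) hq
    field_simp
    ring

/-- Lemma (lemma-app-eNA4, Eqn. (app-11)): with `v_i = ∑_{j≤i}(n_j+m_j)` and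
`w_i = 1 + n_i + v_{i-1}`,
`∑_{i=1}^I q^{-1-∑_{j≤i}n_j}[m_i]/([w_i][w_{i+1}]) ∏_{j=i+2}^{I+1}[1+v_{j-1}]/[w_j]
  = ∏_{i=1}^{I+1}[1+v_{i-1}]/[w_i] - q^{∑ m_i}/[w_{I+1}]`. -/
theorem sum_rule_app11 {K : Type*} [Field K] (q : K)
    (hq : q ≠ 0) (hq2 : q ^ 2 ≠ 1)
    (hpos : ∀ n : ℤ, 1 ≤ n → qint q n ≠ 0)
    (I : ℕ) (m n : ℕ → ℕ)
    (hm : ∀ i ∈ Icc 1 I, 1 ≤ m i) (hn : ∀ i ∈ Icc 1 (I + 1), 1 ≤ n i)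
    (v w : ℕ → ℤ)
    (hv : ∀ i, v i = ∑ j ∈ Icc 1 i, ((n j : ℤ) + (m j : ℤ)))
    (hw : ∀ i, w i = 1 + (n i : ℤ) + v (i - 1)) :
    ∑ i ∈ Icc 1 I,
      q ^ (-1 - ∑ j ∈ Icc 1 i, (n j : ℤ)) * qint q (m i) /
          (qint q (w i) * qint q (w (i + 1))) *
        ∏ j ∈ Icc (i + 2) (I + 1), qint q (1 + v (j - 1)) / qint q (w j)
      = (∏ i ∈ Icc 1 (I + 1), qint q (1 + v (i - 1)) / qint q (w i)) -
          q ^ (∑ i ∈ Icc 1 I, (m i : ℤ)) / qint q (w (I + 1)) := by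
  have hvn : ∀ k : ℕ, 0 ≤ v k := fun k => by
    rw [hv]; exact Finset.sum_nonneg fun j _ => by positivity
  have hwz : ∀ k : ℕ, qint q (w k) ≠ 0 := fun k => by
    apply hpos
    rw [hw]
    have h1 := hvn (k - 1)
    have h2 : (0:ℤ) ≤ (n k : ℤ) := Int.natCast_nonneg _
    linarith
  have h1 : qint q 1 = 1 := qint_one hq hq2
  induction I with
  | zero =>
    rw [show Icc 1 0 = (∅ : Finset ℕ) from rfl]
    simp only [Finset.sum_empty, Icc_self, Finset.prod_singleton]
    have : v 0 = 0 := by rw [hv]; simp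
    simp [this, h1]
  | succ I ih =>
    have ih' := ih (fun i hi => hm i (Finset.mem_Icc.mpr ⟨(Finset.mem_Icc.mp hi).1, (Finset.mem_Icc.mp hi).2.trans (Nat.le_succ I)⟩))
      (fun i hi => hn i (Finset.mem_Icc.mpr ⟨(Finset.mem_Icc.mp hi).1, (Finset.mem_Icc.mp hi).2.trans (Nat.le_succ (I+1))⟩))
    -- split the outer sum at i = I+1
    rw [Finset.sum_Icc_succ_top (by omega : 1 ≤ I + 1)]
    -- for i ≤ I, split the inner product at j = I+2
    have hsplit : ∀ i ∈ Icc 1 I,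
        q ^ (-1 - ∑ j ∈ Icc 1 i, (n j : ℤ)) * qint q (m i) /
            (qint q (w i) * qint q (w (i + 1))) *
          ∏ j ∈ Icc (i + 2) (I + 1 + 1), qint q (1 + v (j - 1)) / qint q (w j)
        = (q ^ (-1 - ∑ j ∈ Icc 1 i, (n j : ℤ)) * qint q (m i) /
            (qint q (w i) * qint q (w (i + 1))) *
          ∏ j ∈ Icc (i + 2) (I + 1), qint q (1 + v (j - 1)) / qint q (w j)) *
          (qint q (1 + v (I + 1)) / qint q (w (I + 2))) := by
      intro i hi
      have hile : i + 2 ≤ I + 2 := by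
        have := (Finset.mem_Icc.mp hi).2; omega
      rw [Finset.prod_Icc_succ_top hile]
      simp only [show I + 1 + 1 - 1 = I + 1 from rfl]
      ring
    rw [Finset.sum_congr rfl hsplit, ← Finset.sum_mul, ih']
    -- split the big product at i = I+2
    rw [Finset.prod_Icc_succ_top (by omega : 1 ≤ I + 1 + 1)]
    simp only [show I + 1 + 1 - 1 = I + 1 from rfl]
    -- the empty product in the new term
    rw [show Icc (I + 1 + 2) (I + 1 + 1) = (∅ : Finset ℕ) from Finset.Icc_eq_empty (by omega),
      Finset.prod_empty, mul_one]
    -- split ∑ n over Icc 1 (I+1) (in the new term) and ∑ m over Icc 1 (I+1)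
    rw [show (∑ j ∈ Icc 1 (I + 1), (n j : ℤ)) = (∑ j ∈ Icc 1 I, (n j : ℤ)) + (n (I + 1) : ℤ)
        from Finset.sum_Icc_succ_top (by omega) _,
      show (∑ i ∈ Icc 1 (I + 1), (m i : ℤ)) = (∑ i ∈ Icc 1 I, (m i : ℤ)) + (m (I + 1) : ℤ)
        from Finset.sum_Icc_succ_top (by omega) _]
    -- key arithmetic facts
    have hA : (1 : ℤ) + v (I + 1) = w (I + 1) + (m (I + 1) : ℤ) := by
      rw [hw, hv, hv, Finset.sum_Icc_succ_top (by omega : 1 ≤ I + 1)]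
      simp only [show I + 1 - 1 = I from rfl]
      ring
    have hB : (-1 : ℤ) - ((∑ j ∈ Icc 1 I, (n j : ℤ)) + (n (I + 1) : ℤ))
        = (∑ i ∈ Icc 1 I, (m i : ℤ)) - w (I + 1) := by
      rw [hw, hv, Finset.sum_add_distrib]
      simp only [show I + 1 - 1 = I from rfl]
      ring
    have key := qint_key hq (∑ i ∈ Icc 1 I, (m i : ℤ)) (w (I + 1)) (m (I + 1))
    rw [hA, hB, key]
    have hB1 := hwz (I + 1)
    have hB2 := hwz (I + 2)
    set P := ∏ i ∈ Icc 1 (I + 1), qint q (1 + v (i - 1)) / qint q (w i) with hP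
    field_simp
    ring
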